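/- (Hecke estimate.) Let k ∈ ℤ and C > 0, and let f : ℍ² → ℂ be a holomorphic function satisfying f(z₁+μ, z₂+μ′) = f(z₁,z₂) for all μ ∈ 𝒪_F and |f(z)| · (Im z₁ · Im z₂)^{k/2} ≤ C for all z ∈ ℍ². Then for every totally positive ν ∈ F with tr(ν𝒪_F) ⊆ ℤ, the Fourier coefficient a_ν(y) is independent of y ∈ (ℝ_{>0})², and its common value a_ν satisfies |a_ν| ≤ e^{4π} · C · N(ν)^{k/2}. -/

import Mathlib

/-- The `ν`-th Fourier coefficient (computed at imaginary part `(y₁, y₂)`) of a function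
`f` on `ℍ² ⊂ ℂ²` which is periodic under the lattice with ℤ-basis having real embeddings
`(μ₁, μ₁')` and `(μ₂, μ₂')`; the frequency `ν` has real embeddings `(ν₁, ν₂)`. -/
noncomputable def hilbertFourierCoeff (f : ℂ × ℂ → ℂ) (μ₁ μ₁' μ₂ μ₂' ν₁ ν₂ y₁ y₂ : ℝ) : ℂ :=
  ∫ t₁ in (0:ℝ)..(1:ℝ), ∫ t₂ in (0:ℝ)..(1:ℝ),
    f (((t₁ * μ₁ + t₂ * μ₂ : ℝ) : ℂ) + (y₁ : ℂ) * Complex.I,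
       ((t₁ * μ₁' + t₂ * μ₂' : ℝ) : ℂ) + (y₂ : ℂ) * Complex.I) *
      Complex.exp ((-2 : ℂ) * (Real.pi : ℂ) * Complex.I *
        ((ν₁ : ℂ) * (((t₁ * μ₁ + t₂ * μ₂ : ℝ) : ℂ) + (y₁ : ℂ) * Complex.I) +
         (ν₂ : ℂ) * (((t₁ * μ₁' + t₂ * μ₂' : ℝ) : ℂ) + (y₂ : ℂ) * Complex.I)))

open Complex Set MeasureTheory intervalIntegral

lemma rect_shift (H : ℂ → ℂ) (s : ℝ)
    (hd : DifferentiableOn ℂ H (Set.uIcc 0 1 ×ℂ Set.uIcc 0 s))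
    (hp : ∀ r : ℝ, r ∈ Set.uIcc 0 s → H (1 + r * Complex.I) = H (r * Complex.I)) :
    (∫ t in (0:ℝ)..1, H t) = ∫ t in (0:ℝ)..1, H (t + s * Complex.I) := by
  have h := Complex.integral_boundary_rect_eq_zero_of_differentiableOn H 0 (1 + s * Complex.I)
    (by simpa using hd)
  simp only [Complex.add_re, Complex.one_re, Complex.mul_re, Complex.ofReal_re, Complex.I_re,
    Complex.ofReal_im, Complex.I_im, Complex.add_im, Complex.one_im, Complex.mul_im,
    Complex.zero_re, Complex.zero_im] at h
  norm_num at h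
  have hv : (∫ y in (0:ℝ)..s, H (1 + y * Complex.I)) = ∫ y in (0:ℝ)..s, H (y * Complex.I) :=
    intervalIntegral.integral_congr (fun r hr => hp r hr)
  rw [hv] at h
  linear_combination h

lemma between_pos {y m s c : ℝ} (hy : 0 < y) (hys : 0 < y + s * m) (hc : c ∈ Set.uIcc 0 s) :
    0 < y + c * m := by
  rcases Set.mem_uIcc.1 hc with ⟨h1, h2⟩ | ⟨h1, h2⟩
  · rcases eq_or_lt_of_le h1 with rfl | hc'
    · simpa using hy
    · nlinarith [mul_nonneg (sub_nonneg.2 h2) hy.le, mul_pos hc' hys]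
  · rcases eq_or_lt_of_le h2 with rfl | hc'
    · simpa using hy
    · nlinarith [mul_nonneg (sub_nonneg.2 h1) hy.le, mul_pos (neg_pos.2 hc') hys]

lemma line_shift (E : ℂ × ℂ → ℂ)
    (hE : DifferentiableOn ℂ E {p : ℂ × ℂ | 0 < p.1.im ∧ 0 < p.2.im})
    (c₁ c₂ : ℝ)
    (hper : ∀ p : ℂ × ℂ, 0 < p.1.im → 0 < p.2.im → E (p.1 + (c₁:ℂ), p.2 + (c₂:ℂ)) = E p)
    (X₁ X₂ y₁ y₂ s : ℝ) (h₁ : 0 < y₁) (h₂ : 0 < y₂)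
    (h₃ : 0 < y₁ + s * c₁) (h₄ : 0 < y₂ + s * c₂) :
    (∫ t in (0:ℝ)..1, E (((X₁ + t * c₁ : ℝ) : ℂ) + (y₁ : ℂ) * Complex.I,
        ((X₂ + t * c₂ : ℝ) : ℂ) + (y₂ : ℂ) * Complex.I))
      = ∫ t in (0:ℝ)..1, E (((X₁ + t * c₁ : ℝ) : ℂ) + ((y₁ + s * c₁ : ℝ) : ℂ) * Complex.I,
          ((X₂ + t * c₂ : ℝ) : ℂ) + ((y₂ + s * c₂ : ℝ) : ℂ) * Complex.I) := by
  set H : ℂ → ℂ := fun w => E ((X₁ : ℂ) + w * (c₁ : ℂ) + (y₁ : ℂ) * Complex.I,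
      (X₂ : ℂ) + w * (c₂ : ℂ) + (y₂ : ℂ) * Complex.I) with hH
  have him1 : ∀ w : ℂ, ((X₁ : ℂ) + w * (c₁ : ℂ) + (y₁ : ℂ) * Complex.I).im = y₁ + w.im * c₁ := by
    intro w; simp [Complex.add_im, Complex.mul_im]; ring
  have him2 : ∀ w : ℂ, ((X₂ : ℂ) + w * (c₂ : ℂ) + (y₂ : ℂ) * Complex.I).im = y₂ + w.im * c₂ := by
    intro w; simp [Complex.add_im, Complex.mul_im]; ring
  have key := rect_shift H s
    (by
      have hg : Differentiable ℂ (fun w : ℂ => ((X₁ : ℂ) + w * (c₁ : ℂ) + (y₁ : ℂ) * Complex.I,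
          (X₂ : ℂ) + w * (c₂ : ℂ) + (y₂ : ℂ) * Complex.I)) := by fun_prop
      exact hE.comp hg.differentiableOn (fun w hw => by
        rcases (Complex.mem_reProdIm).1 hw with ⟨-, hwim⟩
        refine ⟨?_, ?_⟩
        · rw [him1]; exact between_pos h₁ h₃ hwim
        · rw [him2]; exact between_pos h₂ h₄ hwim))
    (by
      intro r hr
      have e1 : (X₁ : ℂ) + (1 + (r : ℂ) * Complex.I) * (c₁ : ℂ) + (y₁ : ℂ) * Complex.I
          = ((X₁ : ℂ) + ((r : ℂ) * Complex.I) * (c₁ : ℂ) + (y₁ : ℂ) * Complex.I) + (c₁ : ℂ) := by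
        ring
      have e2 : (X₂ : ℂ) + (1 + (r : ℂ) * Complex.I) * (c₂ : ℂ) + (y₂ : ℂ) * Complex.I
          = ((X₂ : ℂ) + ((r : ℂ) * Complex.I) * (c₂ : ℂ) + (y₂ : ℂ) * Complex.I) + (c₂ : ℂ) := by
        ring
      show E _ = E _
      rw [e1, e2]
      refine hper (_, _) ?_ ?_
      · rw [him1]; simpa using between_pos h₁ h₃ hr
      · rw [him2]; simpa using between_pos h₂ h₄ hr)
  calc (∫ t in (0:ℝ)..1, E (((X₁ + t * c₁ : ℝ) : ℂ) + (y₁ : ℂ) * Complex.I,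
        ((X₂ + t * c₂ : ℝ) : ℂ) + (y₂ : ℂ) * Complex.I))
      = ∫ t in (0:ℝ)..1, H t := by
        refine intervalIntegral.integral_congr fun t _ => ?_
        show E _ = E _
        push_cast
        ring_nf
    _ = ∫ t in (0:ℝ)..1, H (t + s * Complex.I) := key
    _ = _ := by
        refine intervalIntegral.integral_congr fun t _ => ?_
        show E _ = E _
        push_cast
        ring_nf

lemma interval_swap (G : ℝ → ℝ → ℂ) (hG : Continuous (fun p : ℝ × ℝ => G p.1 p.2)) :
    (∫ t₁ in (0:ℝ)..1, ∫ t₂ in (0:ℝ)..1, G t₁ t₂)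
      = ∫ t₂ in (0:ℝ)..1, ∫ t₁ in (0:ℝ)..1, G t₁ t₂ := by
  have hint : MeasureTheory.Integrable (Function.uncurry G)
      ((MeasureTheory.volume.restrict (Set.Ioc (0:ℝ) 1)).prod
        (MeasureTheory.volume.restrict (Set.Ioc (0:ℝ) 1))) := by
    rw [MeasureTheory.Measure.prod_restrict, ← MeasureTheory.Measure.volume_eq_prod]
    exact ((hG.continuousOn.integrableOn_compact (isCompact_Icc.prod isCompact_Icc)).mono_set
      (Set.prod_mono Set.Ioc_subset_Icc_self Set.Ioc_subset_Icc_self))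
  have := MeasureTheory.integral_integral_swap hint
  simpa only [intervalIntegral.integral_of_le (zero_le_one (α := ℝ))] using this

lemma det_ne (F : Type*) [Field F] [NumberField F] (σ σ' : F →+* ℝ) (hσ : σ ≠ σ')
    (b : Module.Basis (Fin 2) ℤ (NumberField.RingOfIntegers F)) :
    σ (algebraMap (NumberField.RingOfIntegers F) F (b 0)) *
        σ' (algebraMap (NumberField.RingOfIntegers F) F (b 1)) -
      σ (algebraMap (NumberField.RingOfIntegers F) F (b 1)) *
        σ' (algebraMap (NumberField.RingOfIntegers F) F (b 0)) ≠ 0 := by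
  intro h0
  apply hσ
  set B := Module.Basis.localizationLocalization ℚ (nonZeroDivisors ℤ) F b with hB
  have hBapp : ∀ i, B i = algebraMap (NumberField.RingOfIntegers F) F (b i) :=
    fun i => Module.Basis.localizationLocalization_apply ℚ (nonZeroDivisors ℤ) F b i
  have hb0ne : B 0 ≠ 0 := B.ne_zero 0
  have hm0ne : σ (B 0) ≠ 0 := fun h => hb0ne (σ.injective (by simpa using h))
  have hkey : ∀ x : F, σ x * σ' (B 0) = σ (B 0) * σ' x := by
    intro x
    have hx : x = B.repr x 0 • B 0 + B.repr x 1 • B 1 := by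
      conv_lhs => rw [← B.sum_repr x]
      rw [Fin.sum_univ_two]
    have hsmul : ∀ (g : F →+* ℝ) (q : ℚ) (v : F), g (q • v) = (q : ℝ) * g v := by
      intro g q v
      rw [Rat.smul_def, map_mul, map_ratCast]
    rw [hx]
    simp only [map_add, hsmul]
    rw [← hBapp 0, ← hBapp 1] at h0
    linear_combination (-(((B.repr x) 1 : ℝ))) * h0
  have h1 : σ' (B 0) = σ (B 0) := by
    have := hkey 1
    simpa using this
  ext x
  have := hkey x
  rw [h1] at this
  exact mul_left_cancel₀ hm0ne (by linarith [this])


set_option maxHeartbeats 2000000 in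
/-- Hecke estimate: if `f` is holomorphic on `ℍ²`, periodic under `𝒪_F`, and satisfies
`|f(z)| (Im z₁ Im z₂)^{k/2} ≤ C`, then for every totally positive `ν` with
`tr(ν𝒪_F) ⊆ ℤ` the Fourier coefficient `a_ν` is independent of `y` and satisfies
`|a_ν| ≤ e^{4π} C N(ν)^{k/2}`. -/
theorem hecke_estimate
    (d : ℤ) (hd : 1 < d) (hsf : Squarefree d)
    (F : Type*) [Field F] [NumberField F]
    (hrank : Module.finrank ℚ F = 2)
    (sqrtd : F) (hsqrtd : sqrtd ^ 2 = (d : F))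
    (σ σ' : F →+* ℝ) (hσ : σ ≠ σ')
    (b : Module.Basis (Fin 2) ℤ (NumberField.RingOfIntegers F))
    (k : ℤ) (C : ℝ) (hC : 0 < C)
    (f : ℂ × ℂ → ℂ)
    (hf : DifferentiableOn ℂ f {p : ℂ × ℂ | 0 < p.1.im ∧ 0 < p.2.im})
    (hper : ∀ μ : NumberField.RingOfIntegers F, ∀ p : ℂ × ℂ, 0 < p.1.im → 0 < p.2.im →
      f (p.1 + (σ (algebraMap (NumberField.RingOfIntegers F) F μ) : ℂ),
         p.2 + (σ' (algebraMap (NumberField.RingOfIntegers F) F μ) : ℂ)) = f p)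
    (hbound : ∀ p : ℂ × ℂ, 0 < p.1.im → 0 < p.2.im →
      ‖f p‖ * (p.1.im * p.2.im) ^ ((k : ℝ) / 2) ≤ C)
    (ν : F) (hνpos : 0 < σ ν ∧ 0 < σ' ν)
    (hνtr : ∀ μ : NumberField.RingOfIntegers F, ∃ n : ℤ,
      σ (ν * algebraMap (NumberField.RingOfIntegers F) F μ) +
        σ' (ν * algebraMap (NumberField.RingOfIntegers F) F μ) = (n : ℝ)) :
    -- the Fourier coefficient is independent of y
    (∀ y₁ y₂ w₁ w₂ : ℝ, 0 < y₁ → 0 < y₂ → 0 < w₁ → 0 < w₂ →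
      hilbertFourierCoeff f (σ (algebraMap (NumberField.RingOfIntegers F) F (b 0)))
          (σ' (algebraMap (NumberField.RingOfIntegers F) F (b 0)))
          (σ (algebraMap (NumberField.RingOfIntegers F) F (b 1)))
          (σ' (algebraMap (NumberField.RingOfIntegers F) F (b 1)))
          (σ ν) (σ' ν) y₁ y₂
        = hilbertFourierCoeff f (σ (algebraMap (NumberField.RingOfIntegers F) F (b 0)))
            (σ' (algebraMap (NumberField.RingOfIntegers F) F (b 0)))
            (σ (algebraMap (NumberField.RingOfIntegers F) F (b 1)))
            (σ' (algebraMap (NumberField.RingOfIntegers F) F (b 1)))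
            (σ ν) (σ' ν) w₁ w₂) ∧
    -- the Hecke bound |a_ν| ≤ e^{4π} C N(ν)^{k/2}
    (∀ y₁ y₂ : ℝ, 0 < y₁ → 0 < y₂ →
      ‖hilbertFourierCoeff f
          (σ (algebraMap (NumberField.RingOfIntegers F) F (b 0)))
          (σ' (algebraMap (NumberField.RingOfIntegers F) F (b 0)))
          (σ (algebraMap (NumberField.RingOfIntegers F) F (b 1)))
          (σ' (algebraMap (NumberField.RingOfIntegers F) F (b 1)))
          (σ ν) (σ' ν) y₁ y₂‖
        ≤ Real.exp (4 * Real.pi) * C * (σ ν * σ' ν) ^ ((k : ℝ) / 2)) := by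
  obtain ⟨hν1, hν2⟩ := hνpos
  set m0 := σ (algebraMap (NumberField.RingOfIntegers F) F (b 0)) with hm0def
  set m0' := σ' (algebraMap (NumberField.RingOfIntegers F) F (b 0)) with hm0'def
  set m1 := σ (algebraMap (NumberField.RingOfIntegers F) F (b 1)) with hm1def
  set m1' := σ' (algebraMap (NumberField.RingOfIntegers F) F (b 1)) with hm1'def
  set n1 := σ ν with hn1def
  set n2 := σ' ν with hn2def
  set E : ℂ × ℂ → ℂ := fun p => f p * Complex.exp ((-2 : ℂ) * (Real.pi : ℂ) * Complex.I *
      ((n1 : ℂ) * p.1 + (n2 : ℂ) * p.2)) with hEdef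
  have hEdiff : DifferentiableOn ℂ E {p : ℂ × ℂ | 0 < p.1.im ∧ 0 < p.2.im} := by
    apply hf.mul
    apply Differentiable.differentiableOn
    fun_prop
  have hEper : ∀ μ : NumberField.RingOfIntegers F, ∀ p : ℂ × ℂ, 0 < p.1.im → 0 < p.2.im →
      E (p.1 + (σ (algebraMap (NumberField.RingOfIntegers F) F μ) : ℂ),
         p.2 + (σ' (algebraMap (NumberField.RingOfIntegers F) F μ) : ℂ)) = E p := by
    intro μ p h1 h2
    obtain ⟨n, hn⟩ := hνtr μ
    rw [map_mul, map_mul] at hn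
    have hnc : ((n1 : ℝ) : ℂ) * ((σ (algebraMap (NumberField.RingOfIntegers F) F μ) : ℝ) : ℂ)
        + ((n2 : ℝ) : ℂ) * ((σ' (algebraMap (NumberField.RingOfIntegers F) F μ) : ℝ) : ℂ)
        = ((n : ℤ) : ℂ) := by
      rw [hn1def, hn2def]
      exact_mod_cast congrArg (fun r : ℝ => (r : ℂ)) hn
    show f _ * _ = f _ * _
    rw [hper μ p h1 h2]
    congr 1
    rw [show ((-2 : ℂ) * (Real.pi : ℂ) * Complex.I *
        ((n1 : ℂ) * (p.1 + (σ (algebraMap (NumberField.RingOfIntegers F) F μ) : ℂ)) +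
         (n2 : ℂ) * (p.2 + (σ' (algebraMap (NumberField.RingOfIntegers F) F μ) : ℂ))))
        = (-2 : ℂ) * (Real.pi : ℂ) * Complex.I * ((n1 : ℂ) * p.1 + (n2 : ℂ) * p.2)
          + ((-n : ℤ) : ℂ) * (2 * (Real.pi : ℂ) * Complex.I) from by
      push_cast
      push_cast at hnc
      linear_combination (-2) * (Real.pi : ℂ) * Complex.I * hnc]
    rw [Complex.exp_add, Complex.exp_int_mul_two_pi_mul_I, mul_one]
  have hAeq : ∀ y₁ y₂ : ℝ, hilbertFourierCoeff f m0 m0' m1 m1' n1 n2 y₁ y₂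
      = ∫ t₁ in (0:ℝ)..1, ∫ t₂ in (0:ℝ)..1,
          E (((t₁ * m0 + t₂ * m1 : ℝ) : ℂ) + (y₁ : ℂ) * Complex.I,
             ((t₁ * m0' + t₂ * m1' : ℝ) : ℂ) + (y₂ : ℂ) * Complex.I) := fun _ _ => rfl
  have hcont : ∀ y₁ y₂ : ℝ, 0 < y₁ → 0 < y₂ →
      Continuous (fun p : ℝ × ℝ =>
        E (((p.1 * m0 + p.2 * m1 : ℝ) : ℂ) + (y₁ : ℂ) * Complex.I,
           ((p.1 * m0' + p.2 * m1' : ℝ) : ℂ) + (y₂ : ℂ) * Complex.I)) := by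
    intro y₁ y₂ h1 h2
    refine hEdiff.continuousOn.comp_continuous (by fun_prop) fun p => ⟨?_, ?_⟩ <;>
      simp [h1, h2]
  have hstep_v2 : ∀ y₁ y₂ s : ℝ, 0 < y₁ → 0 < y₂ → 0 < y₁ + s * m1 → 0 < y₂ + s * m1' →
      hilbertFourierCoeff f m0 m0' m1 m1' n1 n2 y₁ y₂
        = hilbertFourierCoeff f m0 m0' m1 m1' n1 n2 (y₁ + s * m1) (y₂ + s * m1') := by
    intro y₁ y₂ s p1 p2 p3 p4
    rw [hAeq, hAeq]
    refine intervalIntegral.integral_congr fun t₁ _ => ?_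
    exact line_shift E hEdiff m1 m1' (fun p h1 h2 => hEper (b 1) p h1 h2)
      (t₁ * m0) (t₁ * m0') y₁ y₂ s p1 p2 p3 p4
  have hstep_v1 : ∀ y₁ y₂ s : ℝ, 0 < y₁ → 0 < y₂ → 0 < y₁ + s * m0 → 0 < y₂ + s * m0' →
      hilbertFourierCoeff f m0 m0' m1 m1' n1 n2 y₁ y₂
        = hilbertFourierCoeff f m0 m0' m1 m1' n1 n2 (y₁ + s * m0) (y₂ + s * m0') := by
    intro y₁ y₂ s p1 p2 p3 p4
    rw [hAeq, hAeq]
    calc (∫ t₁ in (0:ℝ)..1, ∫ t₂ in (0:ℝ)..1,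
          E (((t₁ * m0 + t₂ * m1 : ℝ) : ℂ) + (y₁ : ℂ) * Complex.I,
             ((t₁ * m0' + t₂ * m1' : ℝ) : ℂ) + (y₂ : ℂ) * Complex.I))
        = ∫ t₂ in (0:ℝ)..1, ∫ t₁ in (0:ℝ)..1,
            E (((t₁ * m0 + t₂ * m1 : ℝ) : ℂ) + (y₁ : ℂ) * Complex.I,
               ((t₁ * m0' + t₂ * m1' : ℝ) : ℂ) + (y₂ : ℂ) * Complex.I) :=
          interval_swap _ (hcont y₁ y₂ p1 p2)
      _ = ∫ t₂ in (0:ℝ)..1, ∫ t₁ in (0:ℝ)..1,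
            E (((t₁ * m0 + t₂ * m1 : ℝ) : ℂ) + ((y₁ + s * m0 : ℝ) : ℂ) * Complex.I,
               ((t₁ * m0' + t₂ * m1' : ℝ) : ℂ) + ((y₂ + s * m0' : ℝ) : ℂ) * Complex.I) := by
          refine intervalIntegral.integral_congr fun t₂ _ => ?_
          calc (∫ t₁ in (0:ℝ)..1,
                E (((t₁ * m0 + t₂ * m1 : ℝ) : ℂ) + (y₁ : ℂ) * Complex.I,
                   ((t₁ * m0' + t₂ * m1' : ℝ) : ℂ) + (y₂ : ℂ) * Complex.I))
              = ∫ t in (0:ℝ)..1,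
                E (((t₂ * m1 + t * m0 : ℝ) : ℂ) + (y₁ : ℂ) * Complex.I,
                   ((t₂ * m1' + t * m0' : ℝ) : ℂ) + (y₂ : ℂ) * Complex.I) :=
                intervalIntegral.integral_congr fun t _ => by
                  rw [add_comm (t * m0) (t₂ * m1), add_comm (t * m0') (t₂ * m1')]
            _ = ∫ t in (0:ℝ)..1,
                E (((t₂ * m1 + t * m0 : ℝ) : ℂ) + ((y₁ + s * m0 : ℝ) : ℂ) * Complex.I,
                   ((t₂ * m1' + t * m0' : ℝ) : ℂ) + ((y₂ + s * m0' : ℝ) : ℂ) * Complex.I) :=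
                line_shift E hEdiff m0 m0' (fun p h1 h2 => hEper (b 0) p h1 h2)
                  (t₂ * m1) (t₂ * m1') y₁ y₂ s p1 p2 p3 p4
            _ = _ := intervalIntegral.integral_congr fun t _ => by
                  rw [add_comm (t₂ * m1) (t * m0), add_comm (t₂ * m1') (t * m0')]
      _ = _ := (interval_swap _ (hcont (y₁ + s * m0) (y₂ + s * m0') p3 p4)).symm
  have hD : m0 * m1' - m1 * m0' ≠ 0 := det_ne F σ σ' hσ b
  have hDpos : 0 < |m0 * m1' - m1 * m0'| := abs_pos.2 hD
  set S : ℝ := |m0| + |m0'| + |m1| + |m1'| + 1 with hSdef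
  have hS1 : 1 ≤ S := by
    have := abs_nonneg m0; have := abs_nonneg m0'; have := abs_nonneg m1
    have := abs_nonneg m1'
    simp only [hSdef]; linarith
  set R : ℝ := S ^ 2 / |m0 * m1' - m1 * m0'| + 1 with hRdef
  have hRpos : 0 < R := by positivity
  have hstep2 : ∀ p₁ p₂ q₁ q₂ : ℝ, 0 < p₁ → 0 < p₂ → 0 < q₁ → 0 < q₂ →
      R * max |q₁ - p₁| |q₂ - p₂| < p₁ → R * max |q₁ - p₁| |q₂ - p₂| < p₂ →
      hilbertFourierCoeff f m0 m0' m1 m1' n1 n2 p₁ p₂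
        = hilbertFourierCoeff f m0 m0' m1 m1' n1 n2 q₁ q₂ := by
    intro p₁ p₂ q₁ q₂ hp1 hp2 hq1 hq2 hd1 hd2
    set dd := max |q₁ - p₁| |q₂ - p₂| with hdd
    have hdd0 : 0 ≤ dd := le_trans (abs_nonneg _) (le_max_left _ _)
    set s : ℝ := (m1' * (q₁ - p₁) - m1 * (q₂ - p₂)) / (m0 * m1' - m1 * m0') with hsdef
    set u : ℝ := (m0 * (q₂ - p₂) - m0' * (q₁ - p₁)) / (m0 * m1' - m1 * m0') with hudef
    have hrep1 : (p₁ + s * m0) + u * m1 = q₁ := by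
      rw [hsdef, hudef, div_mul_eq_mul_div, div_mul_eq_mul_div, add_assoc, ← add_div,
        add_div' _ _ _ hD, div_eq_iff hD]; ring
    have hrep2 : (p₂ + s * m0') + u * m1' = q₂ := by
      rw [hsdef, hudef, div_mul_eq_mul_div, div_mul_eq_mul_div, add_assoc, ← add_div,
        add_div' _ _ _ hD, div_eq_iff hD]; ring
    have hsb : |s| ≤ S * dd / |m0 * m1' - m1 * m0'| := by
      rw [hsdef, abs_div, div_le_div_iff_of_pos_right hDpos]
      calc |m1' * (q₁ - p₁) - m1 * (q₂ - p₂)|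
          ≤ |m1' * (q₁ - p₁)| + |m1 * (q₂ - p₂)| := abs_sub _ _
        _ = |m1'| * |q₁ - p₁| + |m1| * |q₂ - p₂| := by rw [abs_mul, abs_mul]
        _ ≤ |m1'| * dd + |m1| * dd := by
            gcongr
            · exact le_max_left _ _
            · exact le_max_right _ _
        _ ≤ S * dd := by
            have := abs_nonneg m0; have := abs_nonneg m0'
            nlinarith [hdd0]
    have hub : |u| ≤ S * dd / |m0 * m1' - m1 * m0'| := by
      rw [hudef, abs_div, div_le_div_iff_of_pos_right hDpos]
      calc |m0 * (q₂ - p₂) - m0' * (q₁ - p₁)|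
          ≤ |m0 * (q₂ - p₂)| + |m0' * (q₁ - p₁)| := abs_sub _ _
        _ = |m0| * |q₂ - p₂| + |m0'| * |q₁ - p₁| := by rw [abs_mul, abs_mul]
        _ ≤ |m0| * dd + |m0'| * dd := by
            gcongr
            · exact le_max_right _ _
            · exact le_max_left _ _
        _ ≤ S * dd := by
            have := abs_nonneg m1; have := abs_nonneg m1'
            nlinarith [hdd0]
    have hcoef : ∀ c : ℝ, |c| ≤ S → ∀ v : ℝ, |v| ≤ S * dd / |m0 * m1' - m1 * m0'| →
        |v * c| ≤ R * dd := by
      intro c hc v hv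
      rw [abs_mul]
      calc |v| * |c| ≤ (S * dd / |m0 * m1' - m1 * m0'|) * S := by
            gcongr
        _ = S ^ 2 / |m0 * m1' - m1 * m0'| * dd := by ring
        _ ≤ R * dd := by
            rw [hRdef]; nlinarith [hdd0]
    have hcm0 : |m0| ≤ S := by rw [hSdef]; have := abs_nonneg m0'; have := abs_nonneg m1
                               have := abs_nonneg m1'; linarith
    have hcm0' : |m0'| ≤ S := by rw [hSdef]; have := abs_nonneg m0; have := abs_nonneg m1
                                 have := abs_nonneg m1'; linarith
    have hcm1 : |m1| ≤ S := by rw [hSdef]; have := abs_nonneg m0; have := abs_nonneg m0'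
                               have := abs_nonneg m1'; linarith
    have hcm1' : |m1'| ≤ S := by rw [hSdef]; have := abs_nonneg m0; have := abs_nonneg m0'
                                 have := abs_nonneg m1; linarith
    have hmid1 : 0 < p₁ + s * m0 := by
      have h := hcoef m0 hcm0 s hsb
      have := neg_abs_le (s * m0)
      linarith
    have hmid2 : 0 < p₂ + s * m0' := by
      have h := hcoef m0' hcm0' s hsb
      have := neg_abs_le (s * m0')
      linarith
    calc hilbertFourierCoeff f m0 m0' m1 m1' n1 n2 p₁ p₂
        = hilbertFourierCoeff f m0 m0' m1 m1' n1 n2 (p₁ + s * m0) (p₂ + s * m0') :=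
          hstep_v1 p₁ p₂ s hp1 hp2 hmid1 hmid2
      _ = hilbertFourierCoeff f m0 m0' m1 m1' n1 n2 ((p₁ + s * m0) + u * m1)
            ((p₂ + s * m0') + u * m1') :=
          hstep_v2 _ _ u hmid1 hmid2 (by rw [hrep1]; exact hq1) (by rw [hrep2]; exact hq2)
      _ = _ := by rw [hrep1, hrep2]
  have hconn : ∀ y₁ y₂ w₁ w₂ : ℝ, 0 < y₁ → 0 < y₂ → 0 < w₁ → 0 < w₂ →
      hilbertFourierCoeff f m0 m0' m1 m1' n1 n2 y₁ y₂
        = hilbertFourierCoeff f m0 m0' m1 m1' n1 n2 w₁ w₂ := by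
    intro y₁ y₂ w₁ w₂ hy1 hy2 hw1 hw2
    set δ : ℝ := min (min y₁ y₂) (min w₁ w₂) with hδdef
    have hδpos : 0 < δ := lt_min (lt_min hy1 hy2) (lt_min hw1 hw2)
    set dtot : ℝ := max |w₁ - y₁| |w₂ - y₂| with hdtotdef
    have hdtot0 : 0 ≤ dtot := le_trans (abs_nonneg _) (le_max_left _ _)
    obtain ⟨N, hN⟩ := exists_nat_gt (R * dtot / δ)
    have hN0 : 0 < (N : ℝ) := lt_of_le_of_lt (by positivity) hN
    have hNδ : R * dtot / N < δ := by
      rw [div_lt_iff₀ hN0]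
      rw [div_lt_iff₀ hδpos] at hN
      linarith [hN]
    set p1 : ℕ → ℝ := fun j => y₁ + ((j : ℝ) / N) * (w₁ - y₁) with hp1def
    set p2 : ℕ → ℝ := fun j => y₂ + ((j : ℝ) / N) * (w₂ - y₂) with hp2def
    have hcoord : ∀ j : ℕ, j ≤ N → δ ≤ p1 j ∧ δ ≤ p2 j := by
      intro j hj
      have ht0 : 0 ≤ (j : ℝ) / N := by positivity
      have ht1 : (j : ℝ) / N ≤ 1 := by
        rw [div_le_one hN0]; exact_mod_cast hj
      have h1 : δ ≤ y₁ := le_trans (min_le_left _ _) (min_le_left _ _)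
      have h2 : δ ≤ y₂ := le_trans (min_le_left _ _) (min_le_right _ _)
      have h3 : δ ≤ w₁ := le_trans (min_le_right _ _) (min_le_left _ _)
      have h4 : δ ≤ w₂ := le_trans (min_le_right _ _) (min_le_right _ _)
      constructor
      · simp only [hp1def]; nlinarith [mul_nonneg ht0 (sub_nonneg.2 h3)]
      · simp only [hp2def]; nlinarith [mul_nonneg ht0 (sub_nonneg.2 h4)]
    have hchain : ∀ j : ℕ, j ≤ N → hilbertFourierCoeff f m0 m0' m1 m1' n1 n2 y₁ y₂
        = hilbertFourierCoeff f m0 m0' m1 m1' n1 n2 (p1 j) (p2 j) := by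
      intro j
      induction j with
      | zero =>
        intro _
        have e1 : p1 0 = y₁ := by simp [hp1def]
        have e2 : p2 0 = y₂ := by simp [hp2def]
        rw [e1, e2]
      | succ i ih =>
        intro hj
        have hi : i ≤ N := le_trans (Nat.le_succ i) hj
        rw [ih hi]
        obtain ⟨hc1, hc2⟩ := hcoord i hi
        obtain ⟨hd1, hd2⟩ := hcoord (i + 1) hj
        have hstepd : max |p1 (i+1) - p1 i| |p2 (i+1) - p2 i| ≤ dtot / N := by
          have e1 : p1 (i+1) - p1 i = (w₁ - y₁) / N := by
            simp only [hp1def]; push_cast; field_simp; ring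
          have e2 : p2 (i+1) - p2 i = (w₂ - y₂) / N := by
            simp only [hp2def]; push_cast; field_simp; ring
          rw [e1, e2]
          apply max_le
          · rw [abs_div, abs_of_pos hN0]
            exact (div_le_div_iff_of_pos_right hN0).mpr (le_max_left _ _)
          · rw [abs_div, abs_of_pos hN0]
            exact (div_le_div_iff_of_pos_right hN0).mpr (le_max_right _ _)
        have hRd : R * max |p1 (i+1) - p1 i| |p2 (i+1) - p2 i| < δ := by
          calc R * max |p1 (i+1) - p1 i| |p2 (i+1) - p2 i| ≤ R * (dtot / N) := by
                gcongr
            _ = R * dtot / N := by ring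
            _ < δ := hNδ
        exact hstep2 (p1 i) (p2 i) (p1 (i+1)) (p2 (i+1))
          (lt_of_lt_of_le hδpos hc1) (lt_of_lt_of_le hδpos hc2)
          (lt_of_lt_of_le hδpos hd1) (lt_of_lt_of_le hδpos hd2)
          (hRd.trans_le hc1) (hRd.trans_le hc2)
    have hlast1 : p1 N = w₁ := by
      simp only [hp1def]
      rw [div_self (ne_of_gt hN0)]; ring
    have hlast2 : p2 N = w₂ := by
      simp only [hp2def]
      rw [div_self (ne_of_gt hN0)]; ring
    rw [hchain N le_rfl, hlast1, hlast2]
  refine ⟨fun y₁ y₂ w₁ w₂ h1 h2 h3 h4 => hconn y₁ y₂ w₁ w₂ h1 h2 h3 h4, ?_⟩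
  have hn1pos : (0:ℝ) < 1 / n1 := by positivity
  have hn2pos : (0:ℝ) < 1 / n2 := by positivity
  have hsp : ‖hilbertFourierCoeff f m0 m0' m1 m1' n1 n2 (1/n1) (1/n2)‖
      ≤ Real.exp (4 * Real.pi) * C * (n1 * n2) ^ ((k : ℝ) / 2) := by
    set M := Real.exp (4 * Real.pi) * C * (n1 * n2) ^ ((k : ℝ) / 2) with hMdef
    have hM0 : 0 ≤ M := by positivity
    have hre : ∀ x₁ x₂ y₁ y₂ : ℝ, ((-2 : ℂ) * (Real.pi : ℂ) * Complex.I *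
        ((n1 : ℂ) * ((x₁ : ℂ) + (y₁ : ℂ) * Complex.I) +
         (n2 : ℂ) * ((x₂ : ℂ) + (y₂ : ℂ) * Complex.I))).re
        = 2 * Real.pi * (n1 * y₁ + n2 * y₂) := by
      intros x₁ x₂ y₁ y₂
      simp [Complex.mul_re, Complex.add_re, Complex.mul_im, Complex.add_im]
    have hptw : ∀ t₁ t₂ : ℝ,
        ‖E (((t₁ * m0 + t₂ * m1 : ℝ) : ℂ) + ((1/n1 : ℝ) : ℂ) * Complex.I,
            ((t₁ * m0' + t₂ * m1' : ℝ) : ℂ) + ((1/n2 : ℝ) : ℂ) * Complex.I)‖ ≤ M := by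
      intro t₁ t₂
      set x₁ : ℝ := t₁ * m0 + t₂ * m1
      set x₂ : ℝ := t₁ * m0' + t₂ * m1'
      set z₁ : ℂ := ((x₁ : ℝ) : ℂ) + ((1/n1 : ℝ) : ℂ) * Complex.I with hz₁
      set z₂ : ℂ := ((x₂ : ℝ) : ℂ) + ((1/n2 : ℝ) : ℂ) * Complex.I with hz₂
      have him1 : z₁.im = 1/n1 := by simp [hz₁]
      have him2 : z₂.im = 1/n2 := by simp [hz₂]
      have hfb := hbound (z₁, z₂) (by rw [him1]; exact hn1pos) (by rw [him2]; exact hn2pos)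
      simp only [him1, him2] at hfb
      have hppos : (0:ℝ) < (n1 * n2) ^ ((k : ℝ) / 2) := by positivity
      have hprod : (1/n1 * (1/n2) : ℝ) ^ ((k : ℝ) / 2) = ((n1 * n2) ^ ((k : ℝ) / 2))⁻¹ := by
        rw [show (1/n1 * (1/n2) : ℝ) = (n1 * n2)⁻¹ by field_simp]
        rw [Real.inv_rpow (by positivity)]
      rw [hprod, ← div_eq_mul_inv, div_le_iff₀ hppos] at hfb
      have h4 : 2 * Real.pi * (n1 * (1/n1) + n2 * (1/n2)) = 4 * Real.pi := by
        field_simp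
        ring
      calc ‖E (z₁, z₂)‖
          = ‖f (z₁, z₂)‖ *
              Real.exp (((-2 : ℂ) * (Real.pi : ℂ) * Complex.I *
                ((n1 : ℂ) * z₁ + (n2 : ℂ) * z₂)).re) := by
            rw [hEdef]
            rw [norm_mul, Complex.norm_exp]
        _ = ‖f (z₁, z₂)‖ * Real.exp (4 * Real.pi) := by
            rw [hz₁, hz₂, hre x₁ x₂ (1/n1) (1/n2), h4]
        _ ≤ (C * (n1 * n2) ^ ((k : ℝ) / 2)) * Real.exp (4 * Real.pi) := by
            exact mul_le_mul_of_nonneg_right hfb (Real.exp_nonneg _)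
        _ = M := by rw [hMdef]; ring
    have hM1 : M * |(1:ℝ) - 0| ≤ M := by norm_num
    have hinner : ∀ t₁ : ℝ, ‖∫ t₂ in (0:ℝ)..1,
        E (((t₁ * m0 + t₂ * m1 : ℝ) : ℂ) + ((1/n1 : ℝ) : ℂ) * Complex.I,
           ((t₁ * m0' + t₂ * m1' : ℝ) : ℂ) + ((1/n2 : ℝ) : ℂ) * Complex.I)‖ ≤ M :=
      fun t₁ => le_trans
        (intervalIntegral.norm_integral_le_of_norm_le_const fun t₂ _ => hptw t₁ t₂) hM1
    rw [hAeq]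
    exact le_trans
      (intervalIntegral.norm_integral_le_of_norm_le_const fun t₁ _ => hinner t₁) hM1
  intro y₁ y₂ h1 h2
  rw [hconn y₁ y₂ (1/n1) (1/n2) h1 h2 hn1pos hn2pos]
  exact hsp
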